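/- For all real x > 0, the modified Bessel function satisfies I_{-1}(x) < √(π/8) · e^x / √x. -/

import Mathlib

open Real

/-- The modified Bessel function of the first kind of order `1` (equal to `I_{-1}`),
`I₁(x) = (1/π) ∫_0^π e^{x cos θ} cos θ dθ`. -/
noncomputable def besselI1 (x : ℝ) : ℝ :=
  (1 / Real.pi) * ∫ θ in (0:ℝ)..Real.pi, Real.exp (x * Real.cos θ) * Real.cos θ

theorem stmt15 (x : ℝ) (hx : 0 < x) :
    besselI1 x < Real.sqrt (Real.pi / 8) * Real.exp x / Real.sqrt x := by
  have hπ := Real.pi_pos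
  set b : ℝ := 2 * x / Real.pi ^ 2 with hb
  have hbpos : 0 < b := by positivity
  set g : ℝ → ℝ := fun θ => Real.exp x * Real.exp (-b * θ ^ 2) with hg
  -- pointwise bound
  have key : ∀ θ ∈ Set.Icc (0:ℝ) Real.pi,
      Real.exp (x * Real.cos θ) * Real.cos θ ≤ g θ := by
    rintro θ ⟨h0, h1⟩
    have hcos : Real.cos θ ≤ 1 - 2 * θ ^ 2 / Real.pi ^ 2 := by
      have hj : 2 / Real.pi * (θ / 2) ≤ Real.sin (θ / 2) :=
        Real.mul_le_sin (by linarith) (by linarith)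
      have hθπ : θ / Real.pi ≤ Real.sin (θ / 2) := by
        have h : 2 / Real.pi * (θ / 2) = θ / Real.pi := by field_simp
        rw [h] at hj; exact hj
      have hs0 : (0:ℝ) ≤ θ / Real.pi := by positivity
      have hsq : (θ / Real.pi) ^ 2 ≤ Real.sin (θ / 2) ^ 2 := by
        rw [sq, sq]; exact mul_self_le_mul_self hs0 hθπ
      have hsc := Real.sin_sq_add_cos_sq (θ / 2)
      have hct : Real.cos θ = 2 * Real.cos (θ / 2) ^ 2 - 1 := by
        have h := Real.cos_two_mul (θ / 2)
        rwa [show 2 * (θ / 2) = θ by ring] at h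
      have h1' : (θ / Real.pi) ^ 2 = θ ^ 2 / Real.pi ^ 2 := div_pow θ Real.pi 2
      have h2 : 2 * θ ^ 2 / Real.pi ^ 2 = 2 * (θ ^ 2 / Real.pi ^ 2) := by ring
      linarith [hsq, hsc, hct, h1', h2]
    rcases le_or_gt (Real.cos θ) 0 with hc | hc
    · have hle : Real.exp (x * Real.cos θ) * Real.cos θ ≤ 0 :=
        mul_nonpos_of_nonneg_of_nonpos (Real.exp_pos _).le hc
      exact hle.trans (by positivity)
    · calc Real.exp (x * Real.cos θ) * Real.cos θ
          ≤ Real.exp (x * Real.cos θ) * 1 := by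
            gcongr; exact Real.cos_le_one θ
        _ ≤ Real.exp (x + (-b * θ ^ 2)) := by
            rw [mul_one]
            apply Real.exp_le_exp.2
            rw [hb]
            have : x * Real.cos θ ≤ x * (1 - 2 * θ ^ 2 / Real.pi ^ 2) := by
              exact mul_le_mul_of_nonneg_left hcos hx.le
            calc x * Real.cos θ ≤ x * (1 - 2 * θ ^ 2 / Real.pi ^ 2) := this
              _ = x + -(2 * x / Real.pi ^ 2) * θ ^ 2 := by field_simp; ring
        _ = g θ := by simp only [hg, ← Real.exp_add]
  -- integrability
  have hfc : Continuous fun θ : ℝ => Real.exp (x * Real.cos θ) * Real.cos θ := by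
    fun_prop
  have hgc : Continuous g := by fun_prop
  have hgint : MeasureTheory.Integrable (fun θ : ℝ => Real.exp (-b * θ ^ 2)) :=
    integrable_exp_neg_mul_sq hbpos
  have hgint' : MeasureTheory.Integrable g := hgint.const_mul _
  -- step 1: interval integral comparison
  have step1 : besselI1 x ≤ (1 / Real.pi) * ∫ θ in (0:ℝ)..Real.pi, g θ := by
    unfold besselI1
    have h := intervalIntegral.integral_mono_on (μ := MeasureTheory.volume) hπ.le
        (hfc.intervalIntegrable 0 Real.pi) (hgc.intervalIntegrable 0 Real.pi) key
    exact mul_le_mul_of_nonneg_left h (by positivity)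
  -- step 2: strict comparison with integral over Ioi 0
  have hsplit : ∫ θ in Set.Ioi (0:ℝ), g θ =
      (∫ θ in Set.Ioc (0:ℝ) Real.pi, g θ) + ∫ θ in Set.Ioi Real.pi, g θ := by
    rw [← MeasureTheory.setIntegral_union (Set.Ioc_disjoint_Ioi le_rfl)
      measurableSet_Ioi hgint'.integrableOn hgint'.integrableOn,
      Set.Ioc_union_Ioi_eq_Ioi hπ.le]
  have htail : 0 < ∫ θ in Set.Ioi Real.pi, g θ := by
    rw [MeasureTheory.setIntegral_pos_iff_support_of_nonneg_ae
      (Filter.Eventually.of_forall fun θ => by positivity) hgint'.integrableOn]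
    have hsupp : Function.support g ∩ Set.Ioi Real.pi = Set.Ioi Real.pi :=
      Set.inter_eq_right.mpr fun θ _ =>
        Function.mem_support.mpr (by simp only [hg]; positivity)
    rw [hsupp]
    simp [Real.volume_Ioi]
  have step2 : (∫ θ in (0:ℝ)..Real.pi, g θ) < ∫ θ in Set.Ioi (0:ℝ), g θ := by
    rw [intervalIntegral.integral_of_le hπ.le, hsplit]
    linarith
  -- step 3: compute the Gaussian integral
  have hgauss : ∫ θ in Set.Ioi (0:ℝ), g θ =
      Real.exp x * (Real.sqrt (Real.pi / b) / 2) := by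
    rw [hg, MeasureTheory.integral_const_mul, integral_gaussian_Ioi]
  have hsqrtb : Real.sqrt (Real.pi / b) = Real.pi * Real.sqrt (Real.pi / (2 * x)) := by
    rw [show Real.pi / b = Real.pi ^ 2 * (Real.pi / (2 * x)) by
        rw [hb]; field_simp,
      Real.sqrt_mul (sq_nonneg _), Real.sqrt_sq hπ.le]
  have hsqrt2 : Real.sqrt (Real.pi / (2 * x)) = 2 * Real.sqrt (Real.pi / (8 * x)) := by
    rw [show Real.pi / (2 * x) = 4 * (Real.pi / (8 * x)) by field_simp; ring,
      show (4:ℝ) = 2 ^ 2 by norm_num, Real.sqrt_mul (by positivity),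
      Real.sqrt_sq (by norm_num : (0:ℝ) ≤ 2)]
  have hrhs : Real.sqrt (Real.pi / 8) * Real.exp x / Real.sqrt x =
      Real.exp x * Real.sqrt (Real.pi / (8 * x)) := by
    rw [show Real.pi / (8 * x) = (Real.pi / 8) / x by ring,
      Real.sqrt_div (by positivity : (0:ℝ) ≤ Real.pi / 8) x]
    ring
  have hfinal : (1 / Real.pi) * ∫ θ in Set.Ioi (0:ℝ), g θ =
      Real.sqrt (Real.pi / 8) * Real.exp x / Real.sqrt x := by
    rw [hgauss, hsqrtb, hsqrt2, hrhs]
    generalize Real.sqrt (Real.pi / (8 * x)) = s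
    field_simp
  calc besselI1 x ≤ (1 / Real.pi) * ∫ θ in (0:ℝ)..Real.pi, g θ := step1
    _ < (1 / Real.pi) * ∫ θ in Set.Ioi (0:ℝ), g θ := by
        apply mul_lt_mul_of_pos_left step2 (by positivity)
    _ = _ := hfinal
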